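/- Let G, H, K, L be finite groups, X ≤ G×H, Y ≤ H×K and Z ≤ G×L subgroups, and let M be a left 𝕜X-module, N a left 𝕜Y-module, P a left 𝕜Z-module. Then there is an isomorphism of 𝕜[(X*Y)°*Z]-modules, natural in M, N and P: LHom^{X*Y,Z}_{𝕜G}(M ⊗^{X,Y}_{𝕜H} N, P) ≅ LHom^{Y, X°*Z}_{𝕜H}(N, LHom^{X,Z}_{𝕜G}(M,P)), given by f ↦ (n ↦ (m ↦ f(m⊗n))). -/

import Mathlib

namespace Stmt7

/-- `k₁(X) = {g ∈ G ∣ (g,1) ∈ X}`. -/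
def k1 {G H : Type*} [Group G] [Group H] (X : Subgroup (G × H)) : Subgroup G :=
  X.comap (MonoidHom.inl G H)

/-- `k₂(X) = {h ∈ H ∣ (1,h) ∈ X}`. -/
def k2 {G H : Type*} [Group G] [Group H] (X : Subgroup (G × H)) : Subgroup H :=
  X.comap (MonoidHom.inr G H)

/-- `p₁(X)`, the image of `X` under the first projection. -/
def p1 {G H : Type*} [Group G] [Group H] (X : Subgroup (G × H)) : Subgroup G :=
  X.map (MonoidHom.fst G H)

/-- `p₂(X)`, the image of `X` under the second projection. -/
def p2 {G H : Type*} [Group G] [Group H] (X : Subgroup (G × H)) : Subgroup H :=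
  X.map (MonoidHom.snd G H)

/-- The opposite subgroup `X° = {(h,g) ∣ (g,h) ∈ X}`. -/
def opp {G H : Type*} [Group G] [Group H] (X : Subgroup (G × H)) : Subgroup (H × G) :=
  X.map ((MulEquiv.prodComm : (G × H) ≃* (H × G)).toMonoidHom)

/-- The composition `X*Y` of subgroup correspondences. -/
def comp {G H K : Type*} [Group G] [Group H] [Group K]
    (X : Subgroup (G × H)) (Y : Subgroup (H × K)) : Subgroup (G × K) where
  carrier := {gk | ∃ h : H, (gk.1, h) ∈ X ∧ (h, gk.2) ∈ Y}
  one_mem' := ⟨1, X.one_mem, Y.one_mem⟩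
  mul_mem' := by
    rintro ⟨g, k⟩ ⟨g', k'⟩ ⟨h, hX, hY⟩ ⟨h', hX', hY'⟩
    exact ⟨h * h', X.mul_mem hX hX', Y.mul_mem hY hY'⟩
  inv_mem' := by
    rintro ⟨g, k⟩ ⟨h, hX, hY⟩
    exact ⟨h⁻¹, X.inv_mem hX, Y.inv_mem hY⟩

lemma mem_comp {G H K : Type*} [Group G] [Group H] [Group K]
    {X : Subgroup (G × H)} {Y : Subgroup (H × K)} {x : G × K} :
    x ∈ comp X Y ↔ ∃ h : H, (x.1, h) ∈ X ∧ (h, x.2) ∈ Y := Iff.rfl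

lemma mem_opp {G H : Type*} [Group G] [Group H] {X : Subgroup (G × H)} {x : H × G} :
    x ∈ opp X ↔ (x.2, x.1) ∈ X := by
  rw [opp, Subgroup.mem_map]
  constructor
  · rintro ⟨⟨g, h⟩, hgh, rfl⟩
    simpa using hgh
  · intro hx
    exact ⟨(x.2, x.1), hx, rfl⟩

/-- The diagonal subgroup `Δ(P) = {(g,g) ∣ g ∈ P} ≤ G × G`. -/
def diag {G : Type*} [Group G] (P : Subgroup G) : Subgroup (G × G) :=
  (P.subtype.prod P.subtype).range

/-- The twisted diagonal subgroup `Δ(P,φ,Q) = {(φ y, y) ∣ y ∈ Q} ≤ G × H`. -/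
def tdiag {G H : Type*} [Group G] [Group H] (P : Subgroup G) (Q : Subgroup H)
    (φ : Q ≃* P) : Subgroup (G × H) :=
  ((P.subtype.comp φ.toMonoidHom).prod Q.subtype).range

open scoped TensorProduct

section ExtendedTensor

variable {𝕜 : Type*} [CommRing 𝕜]

/-- The submodule of relations defining the balanced tensor product
`M ⊗_{𝕜[k₂(X)∩k₁(Y)]} N` over the middle group: it is spanned by the elements
`(m·b) ⊗ n - m ⊗ (b·n)` with `b ∈ k₂(X)∩k₁(Y)`, where `m·b = (1,b⁻¹)·m` and
`b·n = (b,1)·n`. -/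
def midRel {A B C : Type*} [Group A] [Group B] [Group C]
    {M N : Type*} [AddCommGroup M] [Module 𝕜 M] [AddCommGroup N] [Module 𝕜 N]
    (X : Subgroup (A × B)) (Y : Subgroup (B × C))
    (ρ : Representation 𝕜 ↥X M) (σ : Representation 𝕜 ↥Y N) :
    Submodule 𝕜 (M ⊗[𝕜] N) :=
  Submodule.span 𝕜 {z | ∃ (b : B) (h1 : (((1 : A), b⁻¹) : A × B) ∈ X)
    (h2 : ((b, (1 : C)) : B × C) ∈ Y) (m : M) (n : N),
      z = (ρ ⟨((1 : A), b⁻¹), h1⟩ m) ⊗ₜ[𝕜] n - m ⊗ₜ[𝕜] (σ ⟨(b, (1 : C)), h2⟩ n)}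

/-- The underlying `𝕜`-module of the extended tensor product `M ⊗^{X,Y}_{𝕜B} N`. -/
abbrev ExtTen {A B C : Type*} [Group A] [Group B] [Group C]
    {M N : Type*} [AddCommGroup M] [Module 𝕜 M] [AddCommGroup N] [Module 𝕜 N]
    (X : Subgroup (A × B)) (Y : Subgroup (B × C))
    (ρ : Representation 𝕜 ↥X M) (σ : Representation 𝕜 ↥Y N) :=
  (M ⊗[𝕜] N) ⧸ midRel X Y ρ σ

/-- The canonical projection onto the extended tensor product. -/
def extMk {A B C : Type*} [Group A] [Group B] [Group C]
    {M N : Type*} [AddCommGroup M] [Module 𝕜 M] [AddCommGroup N] [Module 𝕜 N]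
    (X : Subgroup (A × B)) (Y : Subgroup (B × C))
    (ρ : Representation 𝕜 ↥X M) (σ : Representation 𝕜 ↥Y N) :
    (M ⊗[𝕜] N) →ₗ[𝕜] ExtTen X Y ρ σ :=
  (midRel X Y ρ σ).mkQ

/-- The `𝕜`-module `LHom^{X,Y}_{𝕜A}(M,N) = Hom_{𝕜[k₁(X)∩k₁(Y)]}(M,N)` of
`𝕜`-linear maps commuting with the actions of `k₁(X)∩k₁(Y)` (via `(a,1)`). -/
def lHomSub {A B C : Type*} [Group A] [Group B] [Group C]
    {M N : Type*} [AddCommGroup M] [Module 𝕜 M] [AddCommGroup N] [Module 𝕜 N]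
    (X : Subgroup (A × B)) (Y : Subgroup (A × C))
    (ρ : Representation 𝕜 ↥X M) (σ : Representation 𝕜 ↥Y N) :
    Submodule 𝕜 (M →ₗ[𝕜] N) where
  carrier := {f | ∀ (a : A) (h1 : ((a, (1 : B)) : A × B) ∈ X)
      (h2 : ((a, (1 : C)) : A × C) ∈ Y) (m : M),
        f (ρ ⟨(a, 1), h1⟩ m) = σ ⟨(a, 1), h2⟩ (f m)}
  add_mem' := by
    intro f g hf hg a h1 h2 m
    simp only [LinearMap.add_apply, hf a h1 h2 m, hg a h1 h2 m, map_add]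
  zero_mem' := by
    intro a h1 h2 m
    simp
  smul_mem' := by
    intro c f hf a h1 h2 m
    simp only [LinearMap.smul_apply, hf a h1 h2 m, map_smul]

/-- The `𝕜`-module `RHom^{X,Y}_{𝕜A}(M,N) = Hom_{𝕜[k₂(X)∩k₂(Y)]}(M,N)` of
`𝕜`-linear maps commuting with the actions of `k₂(X)∩k₂(Y)` (via `(1,a)`). -/
def rHomSub {A B C : Type*} [Group A] [Group B] [Group C]
    {M N : Type*} [AddCommGroup M] [Module 𝕜 M] [AddCommGroup N] [Module 𝕜 N]
    (X : Subgroup (B × A)) (Y : Subgroup (C × A))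
    (ρ : Representation 𝕜 ↥X M) (σ : Representation 𝕜 ↥Y N) :
    Submodule 𝕜 (M →ₗ[𝕜] N) where
  carrier := {f | ∀ (a : A) (h1 : (((1 : B), a) : B × A) ∈ X)
      (h2 : (((1 : C), a) : C × A) ∈ Y) (m : M),
        f (ρ ⟨(1, a), h1⟩ m) = σ ⟨(1, a), h2⟩ (f m)}
  add_mem' := by
    intro f g hf hg a h1 h2 m
    simp only [LinearMap.add_apply, hf a h1 h2 m, hg a h1 h2 m, map_add]
  zero_mem' := by
    intro a h1 h2 m
    simp
  smul_mem' := by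
    intro c f hf a h1 h2 m
    simp only [LinearMap.smul_apply, hf a h1 h2 m, map_smul]

/-- The `𝕜`-module of `𝕜I`-linear maps between two representations of a group
`I`, e.g. `Hom_{𝕜[X*X°]}(-,-)` or `Hom_{𝕜X}(-,-)`. -/
def fullHomSub {I : Type*} [Group I]
    {M N : Type*} [AddCommGroup M] [Module 𝕜 M] [AddCommGroup N] [Module 𝕜 N]
    (ρ : Representation 𝕜 I M) (σ : Representation 𝕜 I N) :
    Submodule 𝕜 (M →ₗ[𝕜] N) where
  carrier := {f | ∀ (x : I) (m : M), f (ρ x m) = σ x (f m)}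
  add_mem' := by
    intro f g hf hg x m
    simp only [LinearMap.add_apply, hf x m, hg x m, map_add]
  zero_mem' := by
    intro x m
    simp
  smul_mem' := by
    intro c f hf x m
    simp only [LinearMap.smul_apply, hf x m, map_smul]

/-- Relations defining the induced module `Ind_{X'}^{X}(M') = 𝕜X ⊗_{𝕜X'} M'`:
spanned by `(b·a) ⊗ m - b ⊗ (a·m)` for `a ∈ X'`, `b ∈ X`. -/
noncomputable def indRel {I : Type*} [Group I] (X' X : Subgroup I)
    {M' : Type*} [AddCommGroup M'] [Module 𝕜 M']
    (ρ' : Representation 𝕜 ↥X' M') :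
    Submodule 𝕜 (MonoidAlgebra 𝕜 ↥X ⊗[𝕜] M') :=
  Submodule.span 𝕜 {z | ∃ (b : ↥X) (a : I) (h1 : a ∈ X') (h2 : a ∈ X) (m : M'),
    z = (MonoidAlgebra.single (b * ⟨a, h2⟩) (1 : 𝕜)) ⊗ₜ[𝕜] m -
        (MonoidAlgebra.single b (1 : 𝕜)) ⊗ₜ[𝕜] (ρ' ⟨a, h1⟩ m)}

/-- The underlying `𝕜`-module of the induced module `Ind_{X'}^{X}(M')`. -/
abbrev Ind {I : Type*} [Group I] (X' X : Subgroup I)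
    {M' : Type*} [AddCommGroup M'] [Module 𝕜 M']
    (ρ' : Representation 𝕜 ↥X' M') :=
  (MonoidAlgebra 𝕜 ↥X ⊗[𝕜] M') ⧸ indRel X' X ρ'

/-- The canonical projection onto the induced module. -/
noncomputable def indMk {I : Type*} [Group I] (X' X : Subgroup I)
    {M' : Type*} [AddCommGroup M'] [Module 𝕜 M']
    (ρ' : Representation 𝕜 ↥X' M') :
    (MonoidAlgebra 𝕜 ↥X ⊗[𝕜] M') →ₗ[𝕜] Ind X' X ρ' :=
  (indRel X' X ρ').mkQ

end ExtendedTensor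

section Homs

variable {G H : Type*} [Group G] [Group H]

lemma k1_prod_mem {X : Subgroup (G × H)} (u : ↥(k1 X)) :
    (((u : G), (1 : H)) : G × H) ∈ X := u.2

lemma k1_inv_prod_mem {X : Subgroup (G × H)} (u : ↥(k1 X)) :
    (((u : G)⁻¹, (1 : H)) : G × H) ∈ X := by
  simpa using X.inv_mem (k1_prod_mem u)

lemma k2_prod_mem {X : Subgroup (G × H)} (u : ↥(k2 X)) :
    (((1 : G), (u : H)) : G × H) ∈ X := u.2

/-- The embedding `k₁(X) →* X`, `u ↦ (u,1)`. -/
def k1Hom (X : Subgroup (G × H)) : ↥(k1 X) →* ↥X where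
  toFun u := ⟨((u : G), (1 : H)), u.2⟩
  map_one' := rfl
  map_mul' u v := Subtype.ext (by simp)

/-- The embedding `k₁(X) →* X°`, `u ↦ (1,u)`, giving the right `𝕜[k₁(X)]`-module
structure (read as a left module) on left `𝕜X°`-modules. -/
def k1HomOp (X : Subgroup (G × H)) : ↥(k1 X) →* ↥(opp X) where
  toFun u := ⟨((1 : H), (u : G)), mem_opp.mpr u.2⟩
  map_one' := rfl
  map_mul' u v := Subtype.ext (by simp)

/-- The embedding `k₂(X) →* X`, `u ↦ (1,u)`. -/
def k2Hom (X : Subgroup (G × H)) : ↥(k2 X) →* ↥X where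
  toFun u := ⟨((1 : G), (u : H)), u.2⟩
  map_one' := rfl
  map_mul' u v := Subtype.ext (by simp)

end Homs


section Adjunction

variable {𝕜 : Type*} [CommRing 𝕜]

lemma mem_lHomSub {A B C : Type*} [Group A] [Group B] [Group C]
    {M N : Type*} [AddCommGroup M] [Module 𝕜 M] [AddCommGroup N] [Module 𝕜 N]
    {X : Subgroup (A × B)} {Y : Subgroup (A × C)}
    {ρ : Representation 𝕜 ↥X M} {σ : Representation 𝕜 ↥Y N} {f : M →ₗ[𝕜] N} :
    f ∈ lHomSub X Y ρ σ ↔ ∀ (a : A) (h1 : ((a, (1 : B)) : A × B) ∈ X)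
      (h2 : ((a, (1 : C)) : A × C) ∈ Y) (m : M),
        f (ρ ⟨(a, 1), h1⟩ m) = σ ⟨(a, 1), h2⟩ (f m) := Iff.rfl

lemma rep_inv_apply {I : Type*} [Group I] {V : Type*} [AddCommGroup V] [Module 𝕜 V]
    (ρ : Representation 𝕜 I V) (x : I) (v : V) : ρ x⁻¹ (ρ x v) = v := by
  rw [← Module.End.mul_apply, ← map_mul, inv_mul_cancel, map_one, Module.End.one_apply]

lemma rep_apply_inv {I : Type*} [Group I] {V : Type*} [AddCommGroup V] [Module 𝕜 V]
    (ρ : Representation 𝕜 I V) (x : I) (v : V) : ρ x (ρ x⁻¹ v) = v := by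
  rw [← Module.End.mul_apply, ← map_mul, mul_inv_cancel, map_one, Module.End.one_apply]

end Adjunction

set_option maxHeartbeats 1000000 in
/-- Adjunction between the extended tensor product and the extended
`Hom`:
`LHom^{X*Y,Z}_{𝕜G}(M ⊗^{X,Y}_{𝕜H} N, P) ≅ LHom^{Y,X°*Z}_{𝕜H}(N, LHom^{X,Z}_{𝕜G}(M,P))`
as `𝕜[(X*Y)°*Z]`-modules, via `f ↦ (n ↦ (m ↦ f(m⊗n)))`. -/
theorem stmt7 {𝕜 : Type*} [CommRing 𝕜]
    {G H K L : Type*} [Group G] [Group H] [Group K] [Group L]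
    [Finite G] [Finite H] [Finite K] [Finite L]
    (X : Subgroup (G × H)) (Y : Subgroup (H × K)) (Z : Subgroup (G × L))
    {M N P : Type*} [AddCommGroup M] [Module 𝕜 M] [AddCommGroup N] [Module 𝕜 N]
    [AddCommGroup P] [Module 𝕜 P]
    (ρM : Representation 𝕜 ↥X M) (ρN : Representation 𝕜 ↥Y N)
    (ρP : Representation 𝕜 ↥Z P)
    -- the `𝕜[X*Y]`-module structure on `M ⊗^{X,Y}_{𝕜H} N`
    (ρT : Representation 𝕜 ↥(comp X Y) (ExtTen X Y ρM ρN))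
    (hρT : ∀ (g : G) (k : K) (hgk : (g, k) ∈ comp X Y) (h : H)
      (h1 : (g, h) ∈ X) (h2 : (h, k) ∈ Y) (m : M) (n : N),
      ρT ⟨(g, k), hgk⟩ (extMk X Y ρM ρN (m ⊗ₜ[𝕜] n)) =
        extMk X Y ρM ρN ((ρM ⟨(g, h), h1⟩ m) ⊗ₜ[𝕜] (ρN ⟨(h, k), h2⟩ n)))
    -- the `𝕜[(X*Y)°*Z]`-module structure on `LHom^{X*Y,Z}(M ⊗^{X,Y} N, P)`
    (ρL : Representation 𝕜 ↥(comp (opp (comp X Y)) Z)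
      ↥(lHomSub (comp X Y) Z ρT ρP))
    (hρL : ∀ (b : K) (c : L) (hbc : (b, c) ∈ comp (opp (comp X Y)) Z)
      (a : G) (h1 : (a, b) ∈ comp X Y) (h2 : (a, c) ∈ Z)
      (f : ↥(lHomSub (comp X Y) Z ρT ρP)) (t : ExtTen X Y ρM ρN),
      ((ρL ⟨(b, c), hbc⟩ f : ExtTen X Y ρM ρN →ₗ[𝕜] P)) t =
        ρP ⟨(a, c), h2⟩ ((f : ExtTen X Y ρM ρN →ₗ[𝕜] P) (ρT (⟨(a, b), h1⟩)⁻¹ t)))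
    -- the `𝕜[X°*Z]`-module structure on `LHom^{X,Z}(M,P)`
    (ρI : Representation 𝕜 ↥(comp (opp X) Z) ↥(lHomSub X Z ρM ρP))
    (hρI : ∀ (b : H) (c : L) (hbc : (b, c) ∈ comp (opp X) Z)
      (a : G) (h1 : (a, b) ∈ X) (h2 : (a, c) ∈ Z)
      (f : ↥(lHomSub X Z ρM ρP)) (m : M),
      ((ρI ⟨(b, c), hbc⟩ f : M →ₗ[𝕜] P)) m =
        ρP ⟨(a, c), h2⟩ ((f : M →ₗ[𝕜] P) (ρM (⟨(a, b), h1⟩)⁻¹ m)))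
    -- the `𝕜[Y°*(X°*Z)]`-module structure on `LHom^{Y,X°*Z}(N, LHom^{X,Z}(M,P))`
    (ρR : Representation 𝕜 ↥(comp (opp Y) (comp (opp X) Z))
      ↥(lHomSub Y (comp (opp X) Z) ρN ρI))
    (hρR : ∀ (b : K) (c : L) (hbc : (b, c) ∈ comp (opp Y) (comp (opp X) Z))
      (a : H) (h1 : (a, b) ∈ Y) (h2 : (a, c) ∈ comp (opp X) Z)
      (f : ↥(lHomSub Y (comp (opp X) Z) ρN ρI)) (n : N),
      ((ρR ⟨(b, c), hbc⟩ f : N →ₗ[𝕜] ↥(lHomSub X Z ρM ρP))) n =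
        ρI ⟨(a, c), h2⟩ ((f : N →ₗ[𝕜] ↥(lHomSub X Z ρM ρP)) (ρN (⟨(a, b), h1⟩)⁻¹ n))) :
    ∃ e : ↥(lHomSub (comp X Y) Z ρT ρP) ≃ₗ[𝕜] ↥(lHomSub Y (comp (opp X) Z) ρN ρI),
      (∀ (f : ↥(lHomSub (comp X Y) Z ρT ρP)) (n : N) (m : M),
        (((e f : N →ₗ[𝕜] ↥(lHomSub X Z ρM ρP)) n : M →ₗ[𝕜] P)) m =
          (f : ExtTen X Y ρM ρN →ₗ[𝕜] P) (extMk X Y ρM ρN (m ⊗ₜ[𝕜] n))) ∧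
      (∀ (x : K × L) (hx1 : x ∈ comp (opp (comp X Y)) Z)
        (hx2 : x ∈ comp (opp Y) (comp (opp X) Z))
        (f : ↥(lHomSub (comp X Y) Z ρT ρP)),
        e (ρL ⟨x, hx1⟩ f) = ρR ⟨x, hx2⟩ (e f)) := by
  classical
  -- abbreviation for the quotient map
  -- the curried forward map
  let G1 : ↥(lHomSub (comp X Y) Z ρT ρP) → (N →ₗ[𝕜] (M →ₗ[𝕜] P)) := fun f =>
    (TensorProduct.lcurry (RingHom.id 𝕜) M N P
      ((f : ExtTen X Y ρM ρN →ₗ[𝕜] P) ∘ₗ extMk X Y ρM ρN)).flip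
  have G1_apply : ∀ (f : ↥(lHomSub (comp X Y) Z ρT ρP)) (n : N) (m : M),
      G1 f n m = (f : ExtTen X Y ρM ρN →ₗ[𝕜] P) (extMk X Y ρM ρN (m ⊗ₜ[𝕜] n)) :=
    fun f n m => rfl
  -- the value of the forward map lands in `lHomSub X Z`
  have G1mem : ∀ (f : ↥(lHomSub (comp X Y) Z ρT ρP)) (n : N),
      G1 f n ∈ lHomSub X Z ρM ρP := by
    intro f n
    rw [mem_lHomSub]
    intro a h1 h2 m
    have ha1 : ((a, (1 : K)) : G × K) ∈ comp X Y := ⟨1, h1, Y.one_mem⟩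
    have key := hρT a 1 ha1 1 h1 Y.one_mem m n
    have hone : (⟨(((1 : H)), ((1 : K))), Y.one_mem⟩ : ↥Y) = 1 := rfl
    rw [hone, map_one, Module.End.one_apply] at key
    rw [G1_apply, G1_apply, ← key]
    exact (mem_lHomSub.mp f.2) a ha1 h2 _
  -- the forward map itself lands in `lHomSub Y (comp (opp X) Z)`
  have fwdMem : ∀ (f : ↥(lHomSub (comp X Y) Z ρT ρP)),
      LinearMap.codRestrict (lHomSub X Z ρM ρP) (G1 f) (G1mem f) ∈
        lHomSub Y (comp (opp X) Z) ρN ρI := by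
    intro f
    rw [mem_lHomSub]
    intro a h1 h2 n
    obtain ⟨g', hg1, hg2⟩ := mem_comp.mp h2
    have hgX : ((g', a) : G × H) ∈ X := mem_opp.mp hg1
    apply Subtype.ext
    apply LinearMap.ext
    intro m
    have hcomp : ((g', (1 : K)) : G × K) ∈ comp X Y := ⟨a, hgX, h1⟩
    have key := hρT g' 1 hcomp a hgX h1 (ρM (⟨(g', a), hgX⟩)⁻¹ m) n
    rw [rep_apply_inv] at key
    have goal_eq : G1 f (ρN ⟨(a, 1), h1⟩ n) m =
        ρP ⟨(g', 1), hg2⟩ (G1 f n (ρM (⟨(g', a), hgX⟩)⁻¹ m)) := by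
      rw [G1_apply, G1_apply, ← key]
      exact (mem_lHomSub.mp f.2) g' hcomp hg2 _
    exact goal_eq.trans
      (hρI a 1 h2 g' hgX hg2
        ((LinearMap.codRestrict (lHomSub X Z ρM ρP) (G1 f) (G1mem f)) n) m).symm
  -- the backward map : first on the plain tensor product
  let Psi : ↥(lHomSub Y (comp (opp X) Z) ρN ρI) → ((M ⊗[𝕜] N) →ₗ[𝕜] P) := fun g =>
    TensorProduct.lift
      (((lHomSub X Z ρM ρP).subtype ∘ₗ
        (g : N →ₗ[𝕜] ↥(lHomSub X Z ρM ρP))).flip)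
  have Psi_apply : ∀ (g : ↥(lHomSub Y (comp (opp X) Z) ρN ρI)) (m : M) (n : N),
      Psi g (m ⊗ₜ[𝕜] n) =
        (((g : N →ₗ[𝕜] ↥(lHomSub X Z ρM ρP)) n : ↥(lHomSub X Z ρM ρP)) : M →ₗ[𝕜] P) m :=
    fun g m n => rfl
  -- `Psi g` kills the balancing relations
  have Psiker : ∀ (g : ↥(lHomSub Y (comp (opp X) Z) ρN ρI)),
      midRel X Y ρM ρN ≤ LinearMap.ker (Psi g) := by
    intro g
    rw [midRel, Submodule.span_le]
    rintro z ⟨b, h1, h2, m, n, rfl⟩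
    simp only [SetLike.mem_coe, LinearMap.mem_ker, map_sub]
    have hbX : (((1 : G), b) : G × H) ∈ X := by simpa using X.inv_mem h1
    have hbc : ((b, (1 : L)) : H × L) ∈ comp (opp X) Z :=
      ⟨1, mem_opp.mpr hbX, Z.one_mem⟩
    have hg := (mem_lHomSub.mp g.2) b h2 hbc n
    have hi := hρI b 1 hbc 1 hbX Z.one_mem
      ((g : N →ₗ[𝕜] ↥(lHomSub X Z ρM ρP)) n) m
    have honeZ : (⟨(((1 : G)), ((1 : L))), Z.one_mem⟩ : ↥Z) = 1 := rfl
    rw [honeZ, map_one, Module.End.one_apply] at hi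
    have hinv : (⟨(((1 : G)), b), hbX⟩ : ↥X)⁻¹ = ⟨(((1 : G)), b⁻¹), h1⟩ :=
      Subtype.ext (by simp [Prod.ext_iff])
    rw [hinv] at hi
    rw [Psi_apply, Psi_apply, hg, ← hi, sub_self]
  -- the backward map on the extended tensor product
  have Fmem : ∀ (g : ↥(lHomSub Y (comp (opp X) Z) ρN ρI)),
      Submodule.liftQ (midRel X Y ρM ρN) (Psi g) (Psiker g) ∈
        lHomSub (comp X Y) Z ρT ρP := by
    intro g
    rw [mem_lHomSub]
    intro a h1 h2
    obtain ⟨h, hX, hY⟩ := mem_comp.mp h1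
    have hXZ : ((h, (1 : L)) : H × L) ∈ comp (opp X) Z := ⟨a, mem_opp.mpr hX, h2⟩
    have key : (Submodule.liftQ (midRel X Y ρM ρN) (Psi g) (Psiker g)) ∘ₗ
        (ρT ⟨(a, 1), h1⟩) =
        (ρP ⟨(a, 1), h2⟩) ∘ₗ (Submodule.liftQ (midRel X Y ρM ρN) (Psi g) (Psiker g)) := by
      apply Submodule.linearMap_qext
      apply TensorProduct.ext'
      intro m n
      have kt := hρT a 1 h1 h hX hY m n
      simp only [LinearMap.coe_comp, Function.comp_apply, Submodule.mkQ_apply]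
      have hmk : (Submodule.Quotient.mk (m ⊗ₜ[𝕜] n) : ExtTen X Y ρM ρN) =
          extMk X Y ρM ρN (m ⊗ₜ[𝕜] n) := rfl
      rw [hmk, kt]
      have l1 : (Submodule.liftQ (midRel X Y ρM ρN) (Psi g) (Psiker g))
          (extMk X Y ρM ρN ((ρM ⟨(a, h), hX⟩ m) ⊗ₜ[𝕜] (ρN ⟨(h, 1), hY⟩ n))) =
          (((g : N →ₗ[𝕜] ↥(lHomSub X Z ρM ρP)) (ρN ⟨(h, 1), hY⟩ n) :
            ↥(lHomSub X Z ρM ρP)) : M →ₗ[𝕜] P) (ρM ⟨(a, h), hX⟩ m) := rfl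
      have l2 : (Submodule.liftQ (midRel X Y ρM ρN) (Psi g) (Psiker g))
          (extMk X Y ρM ρN (m ⊗ₜ[𝕜] n)) =
          (((g : N →ₗ[𝕜] ↥(lHomSub X Z ρM ρP)) n :
            ↥(lHomSub X Z ρM ρP)) : M →ₗ[𝕜] P) m := rfl
      rw [l1, l2]
      have hg := (mem_lHomSub.mp g.2) h hY hXZ n
      rw [hg]
      have hi := hρI h 1 hXZ a hX h2
        ((g : N →ₗ[𝕜] ↥(lHomSub X Z ρM ρP)) n) (ρM ⟨(a, h), hX⟩ m)
      rw [hi, rep_inv_apply]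
    intro t
    exact LinearMap.congr_fun key t
  have prop2 : ∀ (b : K) (c : L)
      (hx1 : ((b, c) : K × L) ∈ comp (opp (comp X Y)) Z)
      (hx2 : ((b, c) : K × L) ∈ comp (opp Y) (comp (opp X) Z))
      (f : ↥(lHomSub (comp X Y) Z ρT ρP)),
      (⟨LinearMap.codRestrict (lHomSub X Z ρM ρP) (G1 (ρL ⟨(b, c), hx1⟩ f))
          (G1mem (ρL ⟨(b, c), hx1⟩ f)), fwdMem (ρL ⟨(b, c), hx1⟩ f)⟩ :
        ↥(lHomSub Y (comp (opp X) Z) ρN ρI)) =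
      ρR ⟨(b, c), hx2⟩
        (⟨LinearMap.codRestrict (lHomSub X Z ρM ρP) (G1 f) (G1mem f), fwdMem f⟩ :
          ↥(lHomSub Y (comp (opp X) Z) ρN ρI)) := by
    intro b c hx1 hx2 f
    obtain ⟨a, hab, hac⟩ := mem_comp.mp hx1
    have hab' : ((a, b) : G × K) ∈ comp X Y := mem_opp.mp hab
    obtain ⟨h, hX, hY⟩ := mem_comp.mp hab'
    have hXZ : ((h, c) : H × L) ∈ comp (opp X) Z := ⟨a, mem_opp.mpr hX, hac⟩
    apply Subtype.ext
    apply LinearMap.ext; intro n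
    apply Subtype.ext
    apply LinearMap.ext; intro m
    -- LHS
    have lhs : G1 (ρL ⟨(b, c), hx1⟩ f) n m =
        ρP ⟨(a, c), hac⟩ ((f : ExtTen X Y ρM ρN →ₗ[𝕜] P)
          (ρT (⟨(a, b), hab'⟩)⁻¹ (extMk X Y ρM ρN (m ⊗ₜ[𝕜] n)))) := by
      rw [G1_apply]
      exact hρL b c hx1 a hab' hac f _
    -- compute the action of the inverse on the tensor
    have habinv : ((a⁻¹, b⁻¹) : G × K) ∈ comp X Y :=
      ⟨h⁻¹, X.inv_mem hX, Y.inv_mem hY⟩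
    have hinvT : (⟨(a, b), hab'⟩ : ↥(comp X Y))⁻¹ = ⟨(a⁻¹, b⁻¹), habinv⟩ :=
      Subtype.ext rfl
    have kt := hρT a⁻¹ b⁻¹ habinv h⁻¹ (X.inv_mem hX) (Y.inv_mem hY) m n
    have hinvM : (⟨(a, h), hX⟩ : ↥X)⁻¹ = ⟨(a⁻¹, h⁻¹), X.inv_mem hX⟩ :=
      Subtype.ext rfl
    have hinvN : (⟨(h, b), hY⟩ : ↥Y)⁻¹ = ⟨(h⁻¹, b⁻¹), Y.inv_mem hY⟩ :=
      Subtype.ext rfl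
    -- RHS
    have hr := hρR b c hx2 h hY hXZ
      (⟨LinearMap.codRestrict (lHomSub X Z ρM ρP) (G1 f) (G1mem f), fwdMem f⟩ :
        ↥(lHomSub Y (comp (opp X) Z) ρN ρI)) n
    have hi := hρI h c hXZ a hX hac
      ((LinearMap.codRestrict (lHomSub X Z ρM ρP) (G1 f) (G1mem f))
        (ρN (⟨(h, b), hY⟩)⁻¹ n)) m
    have rhs_eq :
        (((ρR ⟨(b, c), hx2⟩
          (⟨LinearMap.codRestrict (lHomSub X Z ρM ρP) (G1 f) (G1mem f), fwdMem f⟩ :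
            ↥(lHomSub Y (comp (opp X) Z) ρN ρI)) :
          N →ₗ[𝕜] ↥(lHomSub X Z ρM ρP)) n : ↥(lHomSub X Z ρM ρP)) : M →ₗ[𝕜] P) m =
        ρP ⟨(a, c), hac⟩ (G1 f (ρN (⟨(h, b), hY⟩)⁻¹ n) (ρM (⟨(a, h), hX⟩)⁻¹ m)) := by
      rw [hr]
      exact hi
    have final : G1 (ρL ⟨(b, c), hx1⟩ f) n m =
        (((ρR ⟨(b, c), hx2⟩
          (⟨LinearMap.codRestrict (lHomSub X Z ρM ρP) (G1 f) (G1mem f), fwdMem f⟩ :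
            ↥(lHomSub Y (comp (opp X) Z) ρN ρI)) :
          N →ₗ[𝕜] ↥(lHomSub X Z ρM ρP)) n : ↥(lHomSub X Z ρM ρP)) : M →ₗ[𝕜] P) m := by
      rw [lhs, hinvT, kt, rhs_eq, hinvM, hinvN, G1_apply]
    exact final

  -- assemble the equivalence
  refine ⟨{ toFun := fun f =>
              ⟨LinearMap.codRestrict (lHomSub X Z ρM ρP) (G1 f) (G1mem f), fwdMem f⟩,
            invFun := fun g =>
              ⟨Submodule.liftQ (midRel X Y ρM ρN) (Psi g) (Psiker g), Fmem g⟩,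
            map_add' := ?_, map_smul' := ?_,
            left_inv := ?_, right_inv := ?_ }, ?_, ?_⟩
  · intro f f'
    apply Subtype.ext
    apply LinearMap.ext; intro n
    apply Subtype.ext
    apply LinearMap.ext; intro m
    show G1 (f + f') n m = G1 f n m + G1 f' n m
    rw [G1_apply, G1_apply, G1_apply]
    simp
  · intro c f
    apply Subtype.ext
    apply LinearMap.ext; intro n
    apply Subtype.ext
    apply LinearMap.ext; intro m
    show G1 (c • f) n m = c • (G1 f n m)
    rw [G1_apply, G1_apply]
    simp
  · intro f
    apply Subtype.ext
    apply Submodule.linearMap_qext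
    apply TensorProduct.ext'
    intro m n
    show Psi _ (m ⊗ₜ[𝕜] n) = (f : ExtTen X Y ρM ρN →ₗ[𝕜] P)
      (extMk X Y ρM ρN (m ⊗ₜ[𝕜] n))
    rw [Psi_apply]
    rfl
  · intro g
    apply Subtype.ext
    apply LinearMap.ext; intro n
    apply Subtype.ext
    apply LinearMap.ext; intro m
    show G1 _ n m = (((g : N →ₗ[𝕜] ↥(lHomSub X Z ρM ρP)) n :
      ↥(lHomSub X Z ρM ρP)) : M →ₗ[𝕜] P) m
    rw [G1_apply]
    rfl
  · intro f n m
    exact G1_apply f n m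
  · intro x hx1 hx2 f
    exact prop2 x.1 x.2 hx1 hx2 f
end Stmt7
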